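/- Let r ≥ 2, l ≥ 1, and k ≥ 2 be integers, and let T_{r,l} be the perfect r-ary tree of height l. Then CV_k(T_{r,l}) = (r^{l+1} − r^{(l+1) − ⌊(l+1)/(⌈k/2⌉+1)⌋(⌈k/2⌉+1)}) / (r^{⌈k/2⌉+1} − 1). -/

import Mathlib

open SimpleGraph

/-- A graph is in a *failure state* for `k` if every connected component has
diameter less than `k`, i.e. every pair of mutually reachable vertices is at
distance less than `k`. -/
def FailureState {V : Type*} (G : SimpleGraph V) (k : ℕ) : Prop :=
  ∀ u v : V, G.Reachable u v → G.dist u v < k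

/-- `G` contains `m` pairwise vertex-disjoint paths of length `k`. -/
def HasDisjointPaths {V : Type*} (G : SimpleGraph V) (k m : ℕ) : Prop :=
  ∃ (u v : Fin m → V) (P : ∀ i, G.Walk (u i) (v i)),
    (∀ i, (P i).IsPath ∧ (P i).length = k) ∧
    ∀ i j, i ≠ j → ∀ x, x ∈ (P i).support → x ∉ (P j).support

/-- The `k`-diameter component vertex connectivity: the minimum size of a set of
vertices whose deletion leaves every component with diameter less than `k`. -/
noncomputable def CV {V : Type*} (G : SimpleGraph V) (k : ℕ) : ℕ :=
  sInf {n | ∃ V' : Finset V, V'.card = n ∧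
    FailureState (G.induce ((V' : Set V))ᶜ) k}

/-- The `k`-diameter component edge connectivity: the minimum size of a set of
edges whose deletion leaves every component with diameter less than `k`. -/
noncomputable def CE {V : Type*} (G : SimpleGraph V) (k : ℕ) : ℕ :=
  sInf {n | ∃ E' : Finset (Sym2 V), (E' : Set (Sym2 V)) ⊆ G.edgeSet ∧ E'.card = n ∧
    FailureState (G.deleteEdges (E' : Set (Sym2 V))) k}

/-- The `k`-diameter component connectivity function: the minimum over all
`p`-element vertex sets `V'` of `CE k (G - V')`. -/
noncomputable def CM {V : Type*} (G : SimpleGraph V) (k p : ℕ) : ℕ :=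
  sInf {q | ∃ V' : Finset V, V'.card = p ∧
    CE (G.induce ((V' : Set V))ᶜ) k = q}

/-- Vertices of the perfect `r`-ary tree of height `l`: words over `Fin r` of
length at most `l`. The root is the empty word, a vertex at depth `d` is a word
of length `d`, and the leaves are the words of length `l`. -/
def RAryVert (r l : ℕ) : Type := {ws : List (Fin r) // ws.length ≤ l}

/-- The perfect `r`-ary tree of height `l`: two vertices are adjacent iff one is
the parent of the other, i.e. one word is obtained from the other by removing
its head letter. -/
def raryTree (r l : ℕ) : SimpleGraph (RAryVert r l) where
  Adj u v := (∃ a : Fin r, (u.val : List (Fin r)) = a :: v.val) ∨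
             (∃ a : Fin r, (v.val : List (Fin r)) = a :: u.val)
  symm := by
    constructor
    intro u v h
    tauto
  loopless := by
    constructor
    intro u h
    rcases h with ⟨a, h⟩ | ⟨a, h⟩ <;>
      · apply_fun List.length at h
        simp at h

/-- The level of a vertex of `RAryVert r l`: leaves are on level `1` and the
root is on level `l + 1`. -/
def level {r l : ℕ} (w : RAryVert r l) : ℕ := l + 1 - w.val.length


instance {r l : ℕ} : DecidableEq (RAryVert r l) := by unfold RAryVert; infer_instance

/-- all lists over `Fin r` of length `d` -/
def listsOf (r d : ℕ) : Finset (List (Fin r)) :=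
  (Finset.univ : Finset (Fin d → Fin r)).image List.ofFn

lemma mem_listsOf {r d : ℕ} {w : List (Fin r)} : w ∈ listsOf r d ↔ w.length = d := by
  constructor
  · rintro hw
    simp only [listsOf, Finset.mem_image] at hw
    obtain ⟨f, -, rfl⟩ := hw
    simp
  · rintro rfl
    simp only [listsOf, Finset.mem_image]
    exact ⟨w.get, Finset.mem_univ _, List.ofFn_get w⟩

lemma card_listsOf (r d : ℕ) : (listsOf r d).card = r ^ d := by
  rw [listsOf, Finset.card_image_of_injective _ (List.ofFn_injective), Finset.card_univ,
    Fintype.card_fun]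
  simp

/-- the removal set : all vertices on levels `j*(h+1)`, `1 ≤ j ≤ M`. -/
def Rset (r l h M : ℕ) : Finset (RAryVert r l) :=
  (Finset.range M).biUnion fun j =>
    (listsOf r (l + 1 - (j+1)*(h+1))).image fun w =>
      @id (RAryVert r l) ⟨w.take l, by simp⟩

lemma blk_le {j M h l : ℕ} (hj : j < M) (hM : M = (l + 1) / (h + 1)) :
    (j+1)*(h+1) ≤ l + 1 := by
  have h1 : (j+1) * (h+1) ≤ M * (h+1) := Nat.mul_le_mul_right _ (by omega)
  have h2 : M * (h+1) ≤ l + 1 := by rw [hM]; exact Nat.div_mul_le_self _ _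
  omega

lemma blk_pos (j h : ℕ) : 0 < (j+1)*(h+1) := Nat.mul_pos (Nat.succ_pos j) (Nat.succ_pos h)

lemma mem_Rset {r l h M : ℕ} (hM : M = (l + 1) / (h + 1)) {v : RAryVert r l} :
    v ∈ Rset r l h M ↔ (h + 1) ∣ (l + 1 - v.val.length) := by
  constructor
  · intro hv
    simp only [Rset, Finset.mem_biUnion, Finset.mem_range, Finset.mem_image] at hv
    obtain ⟨j, hj, w, hw, hv⟩ := hv
    rw [mem_listsOf] at hw
    have hle : (j+1)*(h+1) ≤ l + 1 := blk_le hj hM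
    have hpos := blk_pos j h
    have htk : w.take l = w := List.take_of_length_le (by omega)
    have hlen : v.val.length = l + 1 - (j+1)*(h+1) := by
      rw [← hv]; simpa [htk, id] using hw
    rw [hlen]
    exact ⟨j + 1, by rw [Nat.sub_sub_self hle, Nat.mul_comm]⟩
  · intro ⟨c, hc⟩
    have hvl : v.val.length ≤ l := v.property
    have hcc : (h+1) * c = l + 1 - v.val.length := hc.symm
    have hc1 : 1 ≤ c := by
      rcases Nat.eq_zero_or_pos c with rfl | h'
      · rw [Nat.mul_zero] at hcc; omega
      · exact h'
    have hc1' : c - 1 + 1 = c := by omega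
    have hcle : c * (h+1) ≤ l + 1 := by rw [Nat.mul_comm]; omega
    have hcM : c ≤ M := by
      rw [hM]
      exact Nat.le_div_iff_mul_le (by omega) |>.2 hcle
    simp only [Rset, Finset.mem_biUnion, Finset.mem_range, Finset.mem_image]
    refine ⟨c - 1, by omega, v.val, ?_, ?_⟩
    · rw [mem_listsOf, hc1', Nat.mul_comm]; omega
    · exact Subtype.ext (by simp [List.take_of_length_le hvl, id])

lemma card_Rset {r l h M : ℕ} (hM : M = (l + 1) / (h + 1)) :
    (Rset r l h M).card = ∑ j ∈ Finset.range M, r ^ (l + 1 - (j+1)*(h+1)) := by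
  rw [Rset, Finset.card_biUnion]
  · refine Finset.sum_congr rfl fun j hj => ?_
    rw [Finset.mem_range] at hj
    have hle : (j+1)*(h+1) ≤ l + 1 := blk_le hj hM
    have hpos := blk_pos j h
    rw [Finset.card_image_of_injOn, card_listsOf]
    intro x hx y hy hxy
    simp only [Finset.mem_coe, mem_listsOf] at hx hy
    have hx' : x.take l = x := List.take_of_length_le (by omega)
    have hy' : y.take l = y := List.take_of_length_le (by omega)
    have := congrArg Subtype.val hxy
    simpa [hx', hy', id] using this
  · intro i hi j hj hij
    simp only [Finset.coe_range, Set.mem_Iio] at hi hj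
    have hlei : (i+1)*(h+1) ≤ l + 1 := blk_le hi hM
    have hlej : (j+1)*(h+1) ≤ l + 1 := blk_le hj hM
    have hpi := blk_pos i h
    have hpj := blk_pos j h
    simp only [Function.onFun, Finset.disjoint_left, Finset.mem_image]
    rintro v ⟨x, hx, rfl⟩ ⟨y, hy, hv⟩
    rw [mem_listsOf] at hx hy
    have hx' : x.take l = x := List.take_of_length_le (by omega)
    have hy' : y.take l = y := List.take_of_length_le (by omega)
    have := congrArg (fun z : RAryVert r l => z.val.length) hv
    simp only [hx', hy'] at this
    simp only [hx, hy, id] at this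
    have heq : (i+1)*(h+1) = (j+1)*(h+1) := by omega
    have : i = j := by
      have := Nat.eq_of_mul_eq_mul_right (Nat.succ_pos h) heq
      omega
    exact hij this


lemma geom_mul (r L h : ℕ) (hr : 1 ≤ r) :
    ∀ m, m * (h+1) ≤ L →
      (∑ j ∈ Finset.range m, r ^ (L - (j+1)*(h+1))) * (r ^ (h+1) - 1)
        = r ^ L - r ^ (L - m*(h+1)) := by
  intro m
  induction m with
  | zero => simp
  | succ m ih =>
    intro hle
    have hstep : (m+1) * (h+1) = m * (h+1) + (h+1) := by ring
    have hle' : m * (h+1) ≤ L := by omega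
    rw [Finset.sum_range_succ, Nat.add_mul, ih hle']
    have hterm : r ^ (L - (m+1)*(h+1)) * (r ^ (h+1) - 1)
        = r ^ (L - m*(h+1)) - r ^ (L - (m+1)*(h+1)) := by
      rw [Nat.mul_sub, Nat.mul_one, ← pow_add]
      congr 2
      omega
    rw [hterm]
    have h1 : r ^ (L - m*(h+1)) ≤ r ^ L := Nat.pow_le_pow_right hr (by omega)
    have h2 : r ^ (L - (m+1)*(h+1)) ≤ r ^ (L - m*(h+1)) := Nat.pow_le_pow_right hr (by omega)
    omega

lemma geom_div (r L h m : ℕ) (hr : 2 ≤ r) (hle : m * (h+1) ≤ L) :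
    (∑ j ∈ Finset.range m, r ^ (L - (j+1)*(h+1)))
      = (r ^ L - r ^ (L - m*(h+1))) / (r ^ (h+1) - 1) := by
  rw [← geom_mul r L h (by omega) m hle]
  rw [Nat.mul_div_cancel]
  have : 2 ^ (h+1) ≤ r ^ (h+1) := Nat.pow_le_pow_left hr _
  have : 2 ≤ 2 ^ (h+1) := by
    have := Nat.one_lt_two_pow (n := h+1) (by omega)
    omega
  omega

/-- D1: walk length dominates difference of depths -/
lemma length_le_walk {r l : ℕ} {u v : RAryVert r l} (p : (raryTree r l).Walk u v) :
    u.val.length ≤ v.val.length + p.length ∧ v.val.length ≤ u.val.length + p.length := by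
  induction p with
  | nil => simp
  | @cons x y z hadj q ih =>
    rw [Walk.length_cons]
    have hxy : (x.val.length = y.val.length + 1) ∨ (y.val.length = x.val.length + 1) := by
      rcases hadj with ⟨a, ha⟩ | ⟨a, ha⟩
      · left; rw [ha]; simp
      · right; rw [ha]; simp
    omega

/-- D2: a walk from inside the subtree below `a₀ :: m` to outside it passes through `m`. -/
lemma pass_through {r l : ℕ} {m : List (Fin r)} (hm : m.length ≤ l) {a₀ : Fin r}
    {u v : RAryVert r l} (p : (raryTree r l).Walk u v)
    (hu : (a₀ :: m) <:+ u.val) (hv : ¬ (a₀ :: m) <:+ v.val) :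
    (⟨m, hm⟩ : RAryVert r l) ∈ p.support := by
  induction p with
  | nil => exact absurd hu hv
  | @cons x y z hadj q ih =>
    rw [Walk.support_cons]
    by_cases hy : (a₀ :: m) <:+ y.val
    · exact List.mem_cons_of_mem _ (ih hy hv)
    · rcases hadj with ⟨a, ha⟩ | ⟨a, ha⟩
      · rw [ha] at hu
        rcases List.suffix_cons_iff.1 hu with heq | hsuf
        · simp only [List.cons.injEq] at heq
          obtain ⟨-, h2⟩ := heq
          have hym : y = (⟨m, hm⟩ : RAryVert r l) := Subtype.ext h2.symm
          exact List.mem_cons_of_mem _ (hym ▸ q.start_mem_support)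
        · exact absurd hsuf hy
      · exact absurd (hu.trans (ha ▸ List.suffix_cons a x.val)) hy

/-- D3: adjacency of successive drops -/
lemma adj_drop {r l : ℕ} (u : RAryVert r l) {i : ℕ} (hi : i < u.val.length)
    (h1 : (u.val.drop i).length ≤ l) (h2 : (u.val.drop (i+1)).length ≤ l) :
    (raryTree r l).Adj ⟨u.val.drop i, h1⟩ ⟨u.val.drop (i+1), h2⟩ := by
  left
  exact ⟨u.val.get ⟨i, hi⟩, by simpa using List.drop_eq_getElem_cons hi⟩

lemma drop_le {r l : ℕ} (u : RAryVert r l) (i : ℕ) : (u.val.drop i).length ≤ l := by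
  rw [List.length_drop]; exact le_trans (Nat.sub_le _ _) u.2

def dropV {r l : ℕ} (u : RAryVert r l) (i : ℕ) : RAryVert r l := ⟨u.val.drop i, drop_le u i⟩

/-- D4: walking up towards the root inside an induced subgraph -/
lemma walk_drop {r l : ℕ} {s : Set (RAryVert r l)} (u : RAryVert r l) :
    ∀ n, n ≤ u.val.length → ∀ hs : (∀ i, i ≤ n → dropV u i ∈ s),
    ∃ p : (SimpleGraph.induce s (raryTree r l)).Walk
      ⟨dropV u 0, hs 0 (Nat.zero_le n)⟩ ⟨dropV u n, hs n le_rfl⟩, p.length = n := by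
  intro n
  induction n with
  | zero => intro _ _; exact ⟨Walk.nil, rfl⟩
  | succ n ih =>
    intro hn hs
    obtain ⟨p, hp⟩ := ih (by omega) (fun i hi => hs i (by omega))
    have hadj : (SimpleGraph.induce s (raryTree r l)).Adj
        ⟨dropV u n, hs n (by omega)⟩ ⟨dropV u (n+1), hs (n+1) le_rfl⟩ :=
      adj_drop u (by omega) _ _
    exact ⟨p.concat hadj, by rw [Walk.length_concat, hp]⟩

def rho (l h d : ℕ) : ℕ := (l + 1 - d) % (h + 1)

def del (l h d : ℕ) : ℕ := min d (h - rho l h d)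

lemma mod_pred {N c : ℕ} (hc : 0 < c) (h : N % c ≠ 0) : (N - 1) % c = N % c - 1 := by
  have hd := Nat.div_add_mod N c
  have hlt : N % c < c := Nat.mod_lt _ hc
  have h1 : 1 ≤ N % c := by omega
  have h2 : N - 1 = (N % c - 1) + c * (N / c) := by omega
  rw [h2, Nat.add_mul_mod_self_left, Nat.mod_eq_of_lt (by omega)]

lemma mod_add_of_lt {N i c : ℕ} (h : N % c + i < c) : (N + i) % c = N % c + i := by
  rw [Nat.add_mod, Nat.mod_eq_of_lt (show i < c by omega), Nat.mod_eq_of_lt h]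

lemma rho_lt (l h d : ℕ) : rho l h d < h + 1 := Nat.mod_lt _ (Nat.succ_pos h)

/-- D5 aux: one directed adjacency preserves the block-top ancestor. -/
lemma adj_inv_aux {r l h : ℕ} {u v : RAryVert r l} {a : Fin r} (ha : u.val = a :: v.val)
    (hu : rho l h u.val.length ≠ 0) (hv : rho l h v.val.length ≠ 0) :
    u.val.drop (del l h u.val.length) = v.val.drop (del l h v.val.length) := by
  have hdu : u.val.length = v.val.length + 1 := by rw [ha]; simp
  set d := v.val.length with hd
  have hdl : d ≤ l := v.2
  have hN : l + 1 - (d + 1) = (l + 1 - d) - 1 := by omega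
  have hv' : (l + 1 - d) % (h + 1) ≠ 0 := hv
  have hrho : rho l h (d+1) = rho l h d - 1 := by
    simp only [rho]
    rw [hN, mod_pred (show 0 < h + 1 by omega) hv']
  have h2 : 2 ≤ rho l h d := by
    rcases Nat.lt_or_ge (rho l h d) 2 with h' | h'
    · exfalso; rw [hdu, hrho] at hu; omega
    · exact h'
  have hrlt := rho_lt l h d
  have hdel : del l h (d+1) = del l h d + 1 := by
    rw [del, del, hrho]
    have : h - (rho l h d - 1) = (h - rho l h d) + 1 := by omega
    rw [this]
    omega
  rw [hdu, hdel, ha, List.drop_succ_cons]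

/-- D5: adjacency preserves the block-top ancestor. -/
lemma adj_inv {r l h : ℕ} {u v : RAryVert r l} (hadj : (raryTree r l).Adj u v)
    (hu : rho l h u.val.length ≠ 0) (hv : rho l h v.val.length ≠ 0) :
    u.val.drop (del l h u.val.length) = v.val.drop (del l h v.val.length) := by
  rcases hadj with ⟨a, ha⟩ | ⟨a, ha⟩
  · exact adj_inv_aux ha hu hv
  · exact (adj_inv_aux ha hv hu).symm

/-- D6: the invariant along a walk in the induced graph of survivors. -/
lemma walk_inv {r l h : ℕ} {s : Set (RAryVert r l)}
    (hsurv : ∀ x : RAryVert r l, x ∈ s → rho l h x.val.length ≠ 0)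
    {x y : ↥s} (p : (SimpleGraph.induce s (raryTree r l)).Walk x y) :
    (x : RAryVert r l).val.drop (del l h (x : RAryVert r l).val.length)
      = (y : RAryVert r l).val.drop (del l h (y : RAryVert r l).val.length) := by
  induction p with
  | nil => rfl
  | @cons a b c hadj q ih =>
    exact (adj_inv (hadj : (raryTree r l).Adj a.1 b.1)
      (hsurv _ a.2) (hsurv _ b.2)).trans ih

lemma rho_drop {r l h : ℕ} (x : RAryVert r l) {i : ℕ} (hi : i ≤ del l h x.val.length) :
    rho l h ((dropV x i).val.length) = rho l h x.val.length + i := by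
  have hlen : (dropV x i).val.length = x.val.length - i := by simp [dropV]
  have hxle : x.val.length ≤ l := x.2
  have hidel : i ≤ x.val.length := le_trans hi (min_le_left _ _)
  have hirho : i ≤ h - rho l h x.val.length := le_trans hi (min_le_right _ _)
  have hrlt := rho_lt l h x.val.length
  have hrr : rho l h x.val.length = (l + 1 - x.val.length) % (h+1) := rfl
  have heq : l + 1 - (x.val.length - i) = (l + 1 - x.val.length) + i := by omega
  rw [hlen]
  show (l + 1 - (x.val.length - i)) % (h+1) = _
  rw [heq, mod_add_of_lt (by omega)]
  omega

/-- upper bound: removing `Rset` leaves a failure state -/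
lemma failure_Rset {r l h M k : ℕ} (hM : M = (l + 1) / (h + 1)) (h1 : 1 ≤ h)
    (h2k : 2 * h ≤ k + 1) :
    FailureState ((raryTree r l).induce ((↑(Rset r l h M) : Set (RAryVert r l))ᶜ)) k := by
  set s : Set (RAryVert r l) := (↑(Rset r l h M) : Set (RAryVert r l))ᶜ with hs
  intro u v hreach
  have hsurv : ∀ x : RAryVert r l, x ∈ s → rho l h x.val.length ≠ 0 := by
    intro x hx hrho0
    exact hx (Finset.mem_coe.2 ((mem_Rset hM).2 (Nat.dvd_of_mod_eq_zero hrho0)))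
  obtain ⟨p⟩ := hreach
  have hinv := walk_inv hsurv p
  have key : ∀ x : ↥s, ∀ i, i ≤ del l h (x : RAryVert r l).val.length → dropV x.1 i ∈ s := by
    rintro ⟨x, hxs⟩ i hi hmem
    have hdvd := (mem_Rset hM).1 (Finset.mem_coe.1 hmem)
    have hmod : (l + 1 - (dropV x i).val.length) % (h+1) = 0 := by
      rcases hdvd with ⟨e, he⟩
      simp [he, Nat.mul_mod_right]
    have := rho_drop (h := h) x hi
    have hx0 := hsurv x hxs
    have : rho l h ((dropV x i).val.length) = 0 := hmod
    omega
  have hru := hsurv _ u.2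
  have hrv := hsurv _ v.2
  have hrltu := rho_lt l h (u : RAryVert r l).val.length
  have hrltv := rho_lt l h (v : RAryVert r l).val.length
  obtain ⟨p1, hp1⟩ := walk_drop (s := s) u.1 (del l h (u : RAryVert r l).val.length)
    (min_le_left _ _) (key u)
  obtain ⟨p2, hp2⟩ := walk_drop (s := s) v.1 (del l h (v : RAryVert r l).val.length)
    (min_le_left _ _) (key v)
  have e1 : (⟨dropV u.1 0, (key u) 0 (Nat.zero_le _)⟩ : ↥s) = u :=
    Subtype.ext (Subtype.ext List.drop_zero)
  have e1' : (⟨dropV v.1 0, (key v) 0 (Nat.zero_le _)⟩ : ↥s) = v :=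
    Subtype.ext (Subtype.ext List.drop_zero)
  have e2 : (⟨dropV u.1 (del l h (u : RAryVert r l).val.length), (key u) _ le_rfl⟩ : ↥s)
      = ⟨dropV v.1 (del l h (v : RAryVert r l).val.length), (key v) _ le_rfl⟩ :=
    Subtype.ext (Subtype.ext (by simp only [dropV]; exact hinv))
  let w := ((p1.copy e1 e2).append (p2.copy e1' rfl).reverse)
  have hd := SimpleGraph.dist_le w
  have hw : w.length = del l h (u : RAryVert r l).val.length
      + del l h (v : RAryVert r l).val.length := by
    simp [w, hp1, hp2]
  have hdu : del l h (u : RAryVert r l).val.length ≤ h - rho l h (u : RAryVert r l).val.length :=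
    min_le_right _ _
  have hdv : del l h (v : RAryVert r l).val.length ≤ h - rho l h (v : RAryVert r l).val.length :=
    min_le_right _ _
  exact lt_of_le_of_lt hd (by omega)

/-- lower bound: any failure set must meet the `h`-neighbourhood below each `m ∈ Rset` -/
lemma hit {r l h M k : ℕ} (hr : 2 ≤ r) (hM : M = (l + 1) / (h + 1))
    (h1 : 1 ≤ h) (hkh : h + 1 ≤ k) (hk2h : k ≤ 2 * h)
    (V' : Finset (RAryVert r l))
    (hfail : FailureState ((raryTree r l).induce ((↑V' : Set (RAryVert r l))ᶜ)) k)
    {m : RAryVert r l} (hm : m ∈ Rset r l h M) :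
    ∃ x ∈ V', m.val <:+ x.val ∧ x.val.length ≤ m.val.length + h := by
  by_contra hcon
  push_neg at hcon
  have hP : ∀ x : RAryVert r l, m.val <:+ x.val → x.val.length ≤ m.val.length + h → x ∉ V' := by
    intro x hsuf hlen hx
    have := hcon x hx hsuf
    omega
  set s : Set (RAryVert r l) := (↑V' : Set (RAryVert r l))ᶜ with hs
  obtain ⟨c, hc⟩ := (mem_Rset hM).1 hm
  have hmlen : m.val.length + h ≤ l := by
    have hc1 : 1 ≤ c := by
      rcases Nat.eq_zero_or_pos c with rfl | hp
      · rw [Nat.mul_zero] at hc; have := m.2; omega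
      · exact hp
    have hch : h + 1 ≤ (h+1) * c := Nat.le_mul_of_pos_right _ hc1
    have := m.2; omega
  set z0 : Fin r := ⟨0, by omega⟩ with hz0
  set z1 : Fin r := ⟨1, by omega⟩ with hz1
  set b : ℕ := k - h with hb
  have hb1 : 1 ≤ b := by omega
  have hbh : b ≤ h := by omega
  set uP : List (Fin r) := List.replicate h z0 with huP
  set vP : List (Fin r) := List.replicate (b-1) z0 ++ [z1] with hvP
  have huPl : uP.length = h := by simp [huP]
  have hvPl : vP.length = b := by simp [hvP]; omega
  set u : RAryVert r l := ⟨uP ++ m.val, by simp [huPl]; omega⟩ with hu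
  set v : RAryVert r l := ⟨vP ++ m.val, by simp [hvPl]; omega⟩ with hv
  have hul : u.val.length = m.val.length + h := by simp [hu, huPl]; omega
  have hvl : v.val.length = m.val.length + b := by simp [hv, hvPl]; omega
  -- memberships of drops
  have hdropgen : ∀ (P : List (Fin r)) (x : RAryVert r l), x.val = P ++ m.val →
      P.length ≤ h → ∀ i, i ≤ P.length → dropV x i ∈ s := by
    intro P x hx hPh i hi hmem
    have hval : (dropV x i).val = P.drop i ++ m.val := by
      show x.val.drop i = _
      rw [hx, List.drop_append_of_le_length hi]
    refine hP (dropV x i) ?_ ?_ (Finset.mem_coe.1 hmem)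
    · rw [hval]; exact List.suffix_append _ _
    · rw [hval, List.length_append, List.length_drop]; omega
  have hudrop : ∀ i, i ≤ h → dropV u i ∈ s := by
    intro i hi
    exact hdropgen uP u rfl (by omega) i (by omega)
  have hvdrop : ∀ i, i ≤ b → dropV v i ∈ s := by
    intro i hi
    exact hdropgen vP v rfl (by omega) i (by omega)
  have huend : (dropV u h).val = m.val := by
    show (uP ++ m.val).drop h = m.val
    rw [show h = uP.length from huPl.symm, List.drop_left]
  have hvend : (dropV v b).val = m.val := by
    show (vP ++ m.val).drop b = m.val
    rw [show b = vP.length from hvPl.symm, List.drop_left]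
  obtain ⟨p1, hp1⟩ := walk_drop (s := s) u h (by omega) hudrop
  obtain ⟨p2, hp2⟩ := walk_drop (s := s) v b (by omega) hvdrop
  have hm_s : m ∈ s := by
    intro hmem
    exact hP m List.suffix_rfl (by omega) (Finset.mem_coe.1 hmem)
  have hu_s : u ∈ s := by
    have := hudrop 0 (by omega)
    rwa [show dropV u 0 = u from Subtype.ext List.drop_zero] at this
  have hv_s : v ∈ s := by
    have := hvdrop 0 (by omega)
    rwa [show dropV v 0 = v from Subtype.ext List.drop_zero] at this
  have e1 : (⟨dropV u 0, hudrop 0 (Nat.zero_le _)⟩ : ↥s) = ⟨u, hu_s⟩ :=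
    Subtype.ext (Subtype.ext List.drop_zero)
  have e2 : (⟨dropV u h, hudrop h le_rfl⟩ : ↥s) = ⟨m, hm_s⟩ :=
    Subtype.ext (Subtype.ext huend)
  have e1' : (⟨dropV v 0, hvdrop 0 (Nat.zero_le _)⟩ : ↥s) = ⟨v, hv_s⟩ :=
    Subtype.ext (Subtype.ext List.drop_zero)
  have e2' : (⟨dropV v b, hvdrop b le_rfl⟩ : ↥s) = ⟨m, hm_s⟩ :=
    Subtype.ext (Subtype.ext hvend)
  have hreach : (SimpleGraph.induce s (raryTree r l)).Reachable ⟨u, hu_s⟩ ⟨v, hv_s⟩ :=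
    ⟨(p1.copy e1 e2).append (p2.copy e1' e2').reverse⟩
  have hdist := hfail _ _ hreach
  obtain ⟨q, hq⟩ := hreach.exists_walk_length_eq_dist
  let φ : (SimpleGraph.induce s (raryTree r l)) →g (raryTree r l) :=
    ⟨Subtype.val, fun {x y} hadj => hadj⟩
  let q' : (raryTree r l).Walk u v := q.map φ
  have husuf : (z0 :: m.val) <:+ u.val := by
    have : uP = List.replicate (h-1) z0 ++ [z0] := by
      rw [huP]
      have := List.replicate_succ' (n := h-1) (a := z0)
      rw [show h - 1 + 1 = h by omega] at this
      exact this
    show (z0 :: m.val) <:+ uP ++ m.val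
    rw [this, List.append_assoc, List.singleton_append]
    exact List.suffix_append _ _
  have hvsuf : (z1 :: m.val) <:+ v.val := by
    show (z1 :: m.val) <:+ vP ++ m.val
    rw [hvP, List.append_assoc, List.singleton_append]
    exact List.suffix_append _ _
  have hvnsuf : ¬ (z0 :: m.val) <:+ v.val := by
    intro hsuf
    have heq : z0 :: m.val = z1 :: m.val := by
      refine List.IsSuffix.eq_of_length ?_ (by simp)
      exact List.suffix_of_suffix_length_le hsuf hvsuf (by simp)
    have : z0 = z1 := (List.cons.injEq _ _ _ _ ▸ heq).1
    rw [hz0, hz1] at this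
    exact absurd (Fin.mk.injEq _ _ _ _ ▸ this) (by omega)
  have hsupp : m ∈ q'.support := pass_through m.2 q' husuf hvnsuf
  have hsplit := q'.take_spec hsupp
  have hlen_split : (q'.takeUntil m hsupp).length + (q'.dropUntil m hsupp).length
      = q'.length := by
    rw [← Walk.length_append, hsplit]
  have hq1 := (length_le_walk (q'.takeUntil m hsupp)).1
  have hq2 := (length_le_walk (q'.dropUntil m hsupp)).2
  have hql : q'.length = q.length := Walk.length_map _ _
  omega

lemma key_inj {r h : ℕ} {m1 m2 x : List (Fin r)} (hlen : m1.length ≤ m2.length)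
    (hs1 : m1 <:+ x) (hs2 : m2 <:+ x) (hx1 : x.length ≤ m1.length + h)
    (hd : (h+1) ∣ (m2.length - m1.length)) : m1 = m2 := by
  have hcmp : m1 <:+ m2 := List.suffix_of_suffix_length_le hs1 hs2 hlen
  have hx2 : m2.length ≤ x.length := hs2.length_le
  rcases Nat.eq_or_lt_of_le hlen with heq | hlt
  · exact List.IsSuffix.eq_of_length hcmp heq
  · exfalso
    have := Nat.le_of_dvd (by omega) hd
    omega

/-- The `k`-diameter component vertex connectivity of the
perfect `r`-ary tree of height `l`. -/
theorem CV_raryTree (r l k h M : ℕ) (hr : 2 ≤ r) (hl : 1 ≤ l) (hk : 2 ≤ k)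
    (hh : h = (k + 1) / 2) (hM : M = (l + 1) / (h + 1)) :
    CV (raryTree r l) k =
      (r ^ (l + 1) - r ^ (l + 1 - M * (h + 1))) / (r ^ (h + 1) - 1) := by
  have hM' : M * (h+1) ≤ l + 1 := by rw [hM]; exact Nat.div_mul_le_self _ _
  have h1 : 1 ≤ h := by omega
  have h2k : 2 * h ≤ k + 1 := by omega
  have hkh : h + 1 ≤ k := by omega
  have hk2h : k ≤ 2 * h := by omega
  have hcard : (Rset r l h M).card = (r^(l+1) - r^(l+1-M*(h+1)))/(r^(h+1)-1) := by
    rw [card_Rset hM, geom_div r (l+1) h M hr hM']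
  refine le_antisymm ?_ ?_
  · exact Nat.sInf_le ⟨Rset r l h M, hcard, failure_Rset hM h1 h2k⟩
  · refine le_csInf ⟨_, Rset r l h M, hcard, failure_Rset hM h1 h2k⟩ ?_
    rintro n ⟨V', rfl, hfail⟩
    rw [← hcard]
    have hhit := fun m (hm : m ∈ Rset r l h M) => hit hr hM h1 hkh hk2h V' hfail hm
    choose f hf using hhit
    refine Finset.card_le_card_of_injOn
      (fun m => if hm : m ∈ Rset r l h M then f m hm else m) ?_ ?_
    · intro m hm
      rw [Finset.mem_coe] at hm
      simp only [dif_pos hm]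
      exact (hf m hm).1
    · intro m1 hm1 m2 hm2 heq
      simp only [Finset.mem_coe] at hm1 hm2
      simp only [dif_pos hm1, dif_pos hm2] at heq
      obtain ⟨-, hs1, hl1⟩ := hf m1 hm1
      obtain ⟨-, hs2, hl2⟩ := hf m2 hm2
      rw [heq] at hs1 hl1
      have hd1 := (mem_Rset hM).1 hm1
      have hd2 := (mem_Rset hM).1 hm2
      have hle1 : m1.val.length ≤ l := m1.2
      have hle2 : m2.val.length ≤ l := m2.2
      rcases le_total m1.val.length m2.val.length with hc | hc
      · refine Subtype.ext (key_inj hc hs1 hs2 hl1 ?_)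
        have heq' : m2.val.length - m1.val.length
            = (l + 1 - m1.val.length) - (l + 1 - m2.val.length) := by omega
        rw [heq']
        exact Nat.dvd_sub hd1 hd2
      · refine Subtype.ext (key_inj hc hs2 hs1 hl2 ?_).symm
        have heq' : m1.val.length - m2.val.length
            = (l + 1 - m2.val.length) - (l + 1 - m1.val.length) := by omega
        rw [heq']
        exact Nat.dvd_sub hd2 hd1
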